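/- For (s,p) ∈ ℂ², the point (s,p) lies in the symmetrized bidisc G₂ = {(λ₁+λ₂, λ₁λ₂) : λ₁, λ₂ ∈ 𝔻} if and only if |s - conj(s)·p| + |p|² < 1. -/

import Mathlib

open Complex Metric

/-- The symmetrized bidisc as the image of the bidisc under symmetrization. -/
def symBidisc : Set (ℂ × ℂ) :=
  {q | ∃ l1 l2 : ℂ, l1 ∈ ball (0:ℂ) 1 ∧ l2 ∈ ball (0:ℂ) 1 ∧ q = (l1 + l2, l1 * l2)}

lemma key_id (l1 l2 : ℂ) :
    (l1 + l2) - (starRingEnd ℂ) (l1 + l2) * (l1 * l2)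
      = l1 * (1 - (((‖l2‖ : ℝ) ^ 2 : ℝ) : ℂ)) + l2 * (1 - (((‖l1‖ : ℝ) ^ 2 : ℝ) : ℂ)) := by
  have h1 : (((‖l1‖ : ℝ) ^ 2 : ℝ) : ℂ) = l1 * (starRingEnd ℂ) l1 := by
    rw [Complex.mul_conj]; norm_cast; exact Complex.sq_norm l1
  have h2 : (((‖l2‖ : ℝ) ^ 2 : ℝ) : ℂ) = l2 * (starRingEnd ℂ) l2 := by
    rw [Complex.mul_conj]; norm_cast; exact Complex.sq_norm l2
  rw [h1, h2, map_add]
  ring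

lemma abs_mul_real (z : ℂ) (r : ℝ) :
    ‖z * (1 - (r : ℂ))‖ = ‖z‖ * |1 - r| := by
  rw [norm_mul]
  congr 1
  rw [show (1 - (r:ℂ)) = ((1 - r : ℝ) : ℂ) by push_cast; ring, Complex.norm_real, Real.norm_eq_abs]

lemma root_lt (l1 l2 : ℂ)
    (h : ‖(l1 + l2) - (starRingEnd ℂ) (l1 + l2) * (l1 * l2)‖
      + (‖l1 * l2‖) ^ 2 < 1) : ‖l1‖ < 1 := by
  by_contra hc
  push_neg at hc
  set a := ‖l1‖ with ha
  set b := ‖l2‖ with hb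
  have hb0 : 0 ≤ b := norm_nonneg l2
  have habs : ‖l1 * l2‖ = a * b := norm_mul _ _
  have hab1 : a * b < 1 := by
    nlinarith [norm_nonneg ((l1 + l2) - (starRingEnd ℂ) (l1 + l2) * (l1 * l2)),
      mul_nonneg (mul_nonneg (le_trans zero_le_one hc) hb0) (mul_nonneg (le_trans zero_le_one hc) hb0)]
  have hblt : b < 1 := by nlinarith
  have hkey := key_id l1 l2
  have t1 : ‖l1 * (1 - ((b ^ 2 : ℝ) : ℂ))‖ = a * (1 - b ^ 2) := by
    rw [abs_mul_real l1 (b^2), _root_.abs_of_nonneg (by nlinarith)]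
  have t2 : ‖l2 * (1 - ((a ^ 2 : ℝ) : ℂ))‖ = b * (a ^ 2 - 1) := by
    rw [abs_mul_real l2 (a^2), _root_.abs_of_nonpos (by nlinarith)]
    ring
  have hlow : a * (1 - b ^ 2) - b * (a ^ 2 - 1)
      ≤ ‖(l1 + l2) - (starRingEnd ℂ) (l1 + l2) * (l1 * l2)‖ := by
    rw [hkey]
    have h3 := norm_sub_norm_le (l1 * (1 - ((b ^ 2 : ℝ) : ℂ))) (-(l2 * (1 - ((a ^ 2 : ℝ) : ℂ))))
    rw [sub_neg_eq_add, norm_neg] at h3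
    rw [t1, t2] at h3
    linarith
  nlinarith [mul_nonneg (mul_nonneg (sub_nonneg.2 hc) (sub_nonneg.2 hblt.le)) (sub_nonneg.2 hab1.le)]

theorem stmt0 (s p : ℂ) :
    (s, p) ∈ symBidisc ↔
      ‖s - (starRingEnd ℂ) s * p‖ + (‖p‖) ^ 2 < 1 := by
  constructor
  · rintro ⟨l1, l2, h1, h2, heq⟩
    rw [Prod.mk.injEq] at heq
    obtain ⟨hs, hp⟩ := heq
    subst hs; subst hp
    rw [mem_ball, dist_zero_right] at h1 h2
    set a := ‖l1‖ with ha
    set b := ‖l2‖ with hb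
    have ha1 : a < 1 := h1
    have hb1 : b < 1 := h2
    have ha0 : 0 ≤ a := norm_nonneg l1
    have hb0 : 0 ≤ b := norm_nonneg l2
    have hkey := key_id l1 l2
    have t1 : ‖l1 * (1 - ((b ^ 2 : ℝ) : ℂ))‖ = a * (1 - b ^ 2) := by
      rw [abs_mul_real l1 (b^2), _root_.abs_of_nonneg (by nlinarith)]
    have t2 : ‖l2 * (1 - ((a ^ 2 : ℝ) : ℂ))‖ = b * (1 - a ^ 2) := by
      rw [abs_mul_real l2 (a^2), _root_.abs_of_nonneg (by nlinarith)]
    have hup : ‖(l1 + l2) - (starRingEnd ℂ) (l1 + l2) * (l1 * l2)‖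
        ≤ a * (1 - b ^ 2) + b * (1 - a ^ 2) := by
      rw [hkey, ← t1, ← t2]
      exact norm_add_le _ _
    have habs : ‖l1 * l2‖ = a * b := norm_mul _ _
    rw [habs]
    nlinarith [mul_pos (mul_pos (sub_pos.2 ha1) (sub_pos.2 hb1))
      (sub_pos.2 (by nlinarith : a * b < 1))]
  · intro h
    obtain ⟨d, hd⟩ := IsAlgClosed.exists_pow_nat_eq (k := ℂ) (s ^ 2 - 4 * p) (n := 2) (by norm_num)
    set l1 := (s + d) / 2 with hl1
    set l2 := (s - d) / 2 with hl2
    have hsum : l1 + l2 = s := by rw [hl1, hl2]; ring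
    have hprod : l1 * l2 = p := by
      rw [hl1, hl2]
      field_simp
      linear_combination -hd
    have h' : ‖(l1 + l2) - (starRingEnd ℂ) (l1 + l2) * (l1 * l2)‖
        + (‖l1 * l2‖) ^ 2 < 1 := by rw [hsum, hprod]; exact h
    refine ⟨l1, l2, ?_, ?_, ?_⟩
    · rw [mem_ball, dist_zero_right]; exact root_lt l1 l2 h'
    · rw [mem_ball, dist_zero_right]
      exact root_lt l2 l1 (by rw [add_comm l2 l1, mul_comm l2 l1]; exact h')
    · rw [hsum, hprod]
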